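/- Let K = 2^m for a natural number m ≥ 1. Let a* ∈ ℝ^{K−1}, and let a' ∈ ℝ^{2K−1} be the vector obtained by appending K zeros to a*, i.e., a' = [a*, 0_K]. Write b* and b̄* for b(a*) and Σ_j â*_j b_j(a*) computed with the (K−1)×(K−1) matrix Ψ_{K−1}, and b', b̄' for the analogous quantities computed for a' with the (2K−1)×(2K−1) matrix Ψ_{2K−1}. Then b'_i = 2·b*_i for all i = 1, …, K−1, and b̄' = 2·b̄*. -/

import Mathlib

open Matrix Finset

noncomputable section

/-- The Sylvester Hadamard matrix `Φ_{2^m}`, defined recursively by `Φ₁ = (1)` and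
`Φ_{2^{m+1}} = [[Φ_{2^m}, Φ_{2^m}], [Φ_{2^m}, -Φ_{2^m}]]`. -/
def sylvester : (m : ℕ) → Matrix (Fin (2 ^ m)) (Fin (2 ^ m)) ℝ
  | 0 => Matrix.of fun _ _ => 1
  | m + 1 => Matrix.of fun i j =>
      (if 2 ^ m ≤ i.val ∧ 2 ^ m ≤ j.val then -1 else 1) *
        sylvester m ⟨i.val % 2 ^ m, Nat.mod_lt _ (Nat.two_pow_pos m)⟩
          ⟨j.val % 2 ^ m, Nat.mod_lt _ (Nat.two_pow_pos m)⟩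

/-- The core `X = Φ[2:K, 2:K]` obtained by deleting the first row and column of `Φ`. -/
def hadCore (m : ℕ) : Matrix (Fin (2 ^ m - 1)) (Fin (2 ^ m - 1)) ℝ :=
  Matrix.of fun i j =>
    sylvester m ⟨i.val + 1, by have h1 := Nat.two_pow_pos m; have h2 := i.isLt; omega⟩
      ⟨j.val + 1, by have h1 := Nat.two_pow_pos m; have h2 := j.isLt; omega⟩

/-- `Ψ = 1 1ᵀ − X`. -/
def PsiM (m : ℕ) : Matrix (Fin (2 ^ m - 1)) (Fin (2 ^ m - 1)) ℝ :=
  Matrix.of fun i j => 1 - hadCore m i j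

/-- `b_i(a) = Σ_j Ψ_{ij} exp(−(Ψa)_j)`. -/
def bVec (m : ℕ) (a : Fin (2 ^ m - 1) → ℝ) (i : Fin (2 ^ m - 1)) : ℝ :=
  ∑ j, PsiM m i j * Real.exp (-((PsiM m).mulVec a j))

/-- `D(a) = 1 + Σ_j exp(−(Ψa)_j)`. -/
def Dden (m : ℕ) (a : Fin (2 ^ m - 1) → ℝ) : ℝ :=
  1 + ∑ j, Real.exp (-((PsiM m).mulVec a j))

/-- The energy `E(a) = log(1 + Σ_j exp(−(Ψa)_j))`. -/
def energyE (m : ℕ) (a : Fin (2 ^ m - 1) → ℝ) : ℝ :=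
  Real.log (1 + ∑ j, Real.exp (-((PsiM m).mulVec a j)))

/-- `b̄(a) = Σ_j â_j b_j(a)` with `â = a / ‖a‖₁`. -/
def bbar (m : ℕ) (a : Fin (2 ^ m - 1) → ℝ) : ℝ :=
  ∑ j, (a j / ∑ k, a k) * bVec m a j

/-- `M(a) = (1/2) Σ_i (â_i − 1/(K−1))²`. -/
def Mmetric (m : ℕ) (a : Fin (2 ^ m - 1) → ℝ) : ℝ :=
  (1 / 2) * ∑ i, (a i / (∑ k, a k) - 1 / ((2 : ℝ) ^ m - 1)) ^ 2

lemma syl_col0 : ∀ (m : ℕ) (i : Fin (2^m)) (h : 0 < 2^m), sylvester m i ⟨0, h⟩ = 1 := by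
  intro m
  induction m with
  | zero => intro i h; rfl
  | succ m ih =>
    intro i h
    show (if 2 ^ m ≤ i.val ∧ 2 ^ m ≤ (0:ℕ) then (-1:ℝ) else 1) * _ = 1
    rw [if_neg (by have := Nat.two_pow_pos m; omega), one_mul]
    convert ih _ (Nat.two_pow_pos m) using 2
    exact Fin.ext (Nat.zero_mod _)

lemma syl_row0 : ∀ (m : ℕ) (j : Fin (2^m)) (h : 0 < 2^m), sylvester m ⟨0, h⟩ j = 1 := by
  intro m
  induction m with
  | zero => intro j h; rfl
  | succ m ih =>
    intro j h
    show (if 2 ^ m ≤ (0:ℕ) ∧ 2 ^ m ≤ j.val then (-1:ℝ) else 1) * _ = 1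
    rw [if_neg (by have := Nat.two_pow_pos m; omega), one_mul]
    convert ih _ (Nat.two_pow_pos m) using 2
    exact Fin.ext (Nat.zero_mod _)

lemma syl_symm : ∀ (m : ℕ) (i j : Fin (2^m)), sylvester m i j = sylvester m j i := by
  intro m
  induction m with
  | zero => intro i j; rfl
  | succ m ih =>
    intro i j
    show (if 2 ^ m ≤ i.val ∧ 2 ^ m ≤ j.val then (-1:ℝ) else 1) * _
       = (if 2 ^ m ≤ j.val ∧ 2 ^ m ≤ i.val then (-1:ℝ) else 1) * _
    rw [ih]
    by_cases h1 : 2^m ≤ i.val <;> by_cases hj1 : 2^m ≤ j.val <;> simp [h1, hj1]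

lemma psi_symm (m : ℕ) (i j : Fin (2^m - 1)) : PsiM m i j = PsiM m j i := by
  show 1 - sylvester m _ _ = 1 - sylvester m _ _
  rw [syl_symm]

lemma syl_mk_eq (m : ℕ) {a b c d : ℕ} (hab : a = b) (hcd : c = d)
    (h1 : a < 2^m) (h3 : c < 2^m) :
    sylvester m ⟨a,h1⟩ ⟨c,h3⟩ = sylvester m ⟨b, hab ▸ h1⟩ ⟨d, hcd ▸ h3⟩ := by
  subst hab; subst hcd; rfl

lemma two_pow_succ_sub (m : ℕ) : 2^(m+1) = 2*2^m := by rw [pow_succ]; ring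

lemma lt1 (m : ℕ) (j : Fin (2^m - 1)) : (j:ℕ) < 2^(m+1)-1 := by
  have := two_pow_succ_sub m; have := j.isLt; omega
lemma lt2 (m : ℕ) : 2^m - 1 < 2^(m+1)-1 := by
  have := two_pow_succ_sub m; have := Nat.two_pow_pos m; omega
lemma lt3 (m : ℕ) (j : Fin (2^m - 1)) : 2^m + (j:ℕ) < 2^(m+1)-1 := by
  have := two_pow_succ_sub m; have := j.isLt; omega

/-- row `i < 2^m - 1`, arbitrary column. -/
lemma psi_row_lt (m : ℕ) (i j : ℕ) (hi : i < 2^m - 1) (hj : j < 2^(m+1)-1)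
    (hi2 : i < 2^(m+1)-1) :
    PsiM (m+1) ⟨i,hi2⟩ ⟨j,hj⟩ =
      if hj' : j < 2^m - 1 then PsiM m ⟨i,hi⟩ ⟨j,hj'⟩
      else if j = 2^m - 1 then 0
      else PsiM m ⟨i,hi⟩ ⟨j - 2^m, by have := two_pow_succ_sub m; omega⟩ := by
  have hK := Nat.two_pow_pos m
  have h2 := two_pow_succ_sub m
  have key : PsiM (m+1) ⟨i,hi2⟩ ⟨j,hj⟩
      = 1 - (if 2^m ≤ i+1 ∧ 2^m ≤ j+1 then (-1:ℝ) else 1) *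
          sylvester m ⟨(i+1) % 2^m, Nat.mod_lt _ (Nat.two_pow_pos m)⟩
            ⟨(j+1) % 2^m, Nat.mod_lt _ (Nat.two_pow_pos m)⟩ := rfl
  rw [key]
  have hi1 : (i+1) % 2^m = i+1 := Nat.mod_eq_of_lt (by omega)
  by_cases hj' : j < 2^m - 1
  · rw [dif_pos hj', if_neg (by omega), one_mul]
    have hj1 : (j+1) % 2^m = j+1 := Nat.mod_eq_of_lt (by omega)
    rw [syl_mk_eq m hi1 hj1]
    rfl
  · rw [dif_neg hj']
    by_cases hjm : j = 2^m - 1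
    · rw [if_pos hjm, if_neg (by omega), one_mul]
      have hj1 : (j+1) % 2^m = 0 := by
        have : j+1 = 2^m := by omega
        rw [this, Nat.mod_self]
      rw [syl_mk_eq m hi1 hj1, syl_col0]
      norm_num
    · rw [if_neg hjm, if_neg (by omega), one_mul]
      have hj1 : (j+1) % 2^m = (j - 2^m) + 1 := by
        rw [Nat.mod_eq_sub_mod (by omega), show j + 1 - 2^m = j - 2^m + 1 by omega,
          Nat.mod_eq_of_lt (by omega)]
      rw [syl_mk_eq m hi1 hj1]
      rfl

lemma sum_split (N : ℕ) (F : ℕ → ℝ) :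
    ∑ j ∈ Finset.range (2*N+1), F j
      = (∑ j ∈ Finset.range N, F j) + F N + ∑ j ∈ Finset.range N, F (N+1+j) := by
  rw [← Finset.sum_range_add_sum_Ico F (show N+1 ≤ 2*N+1 by omega), Finset.sum_range_succ,
    Finset.sum_Ico_eq_sum_range, show 2*N+1-(N+1) = N from by omega]

lemma fin_sum_split' (n N : ℕ) (h : n = 2*N+1) (f : Fin n → ℝ)
    (g : ℕ → ℝ) (hg : ∀ j (hj : j < n), g j = f ⟨j, hj⟩) :
    ∑ j, f j = (∑ j ∈ Finset.range N, g j) + g N + ∑ j ∈ Finset.range N, g (N+1+j) := by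
  have h1 : ∑ j, f j = ∑ j ∈ Finset.range n, g j := by
    rw [← Fin.sum_univ_eq_sum_range]
    exact Finset.sum_congr rfl fun j _ => (hg j j.isLt).symm
  rw [h1, h, sum_split]

lemma fin_sum_split (m : ℕ) (f : Fin (2^(m+1)-1) → ℝ) :
    ∑ j, f j = (∑ j : Fin (2^m - 1), f ⟨j, lt1 m j⟩) + f ⟨2^m - 1, lt2 m⟩
      + ∑ j : Fin (2^m - 1), f ⟨2^m + j, lt3 m j⟩ := by
  have h2 := two_pow_succ_sub m
  have hK := Nat.two_pow_pos m
  rw [fin_sum_split' (2^(m+1)-1) (2^m-1) (by omega) f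
      (fun j => if h : j < 2^(m+1)-1 then f ⟨j,h⟩ else 0) (fun j hj => dif_pos hj)]
  congr 1
  · congr 1
    · rw [← Fin.sum_univ_eq_sum_range]
      refine Finset.sum_congr rfl fun j _ => ?_
      rw [dif_pos (lt1 m j)]
    · rw [dif_pos (lt2 m)]
  · rw [← Fin.sum_univ_eq_sum_range]
    refine Finset.sum_congr rfl fun j _ => ?_
    rw [dif_pos (by have := j.isLt; omega)]
    congr 1
    exact Fin.ext (by simp; omega)

/-- doubling lemma for `b` and `b̄` under zero-padding.
Let `K = 2^m`, `a* ∈ ℝ^{K−1}`, and let `a' ∈ ℝ^{2K−1}` be obtained by appending `K` zeros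
to `a*`. Then `b'_i = 2 b*_i` for all `i = 1, …, K−1`, and `b̄' = 2 b̄*`, where the primed
quantities are computed with `Ψ_{2K−1}` and the starred ones with `Ψ_{K−1}`. -/
theorem bVec_doubling_under_padding (m : ℕ) (hm : 1 ≤ m)
    (astar : Fin (2 ^ m - 1) → ℝ) (a' : Fin (2 ^ (m + 1) - 1) → ℝ)
    (ha' : a' = fun j => if h : j.val < 2 ^ m - 1 then astar ⟨j.val, h⟩ else 0) :
    (∀ i : Fin (2 ^ m - 1),
      bVec (m + 1) a'
        ⟨i.val, by
          have h1 := Nat.two_pow_pos m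
          have h2 : 2 ^ (m + 1) = 2 * 2 ^ m := by rw [pow_succ]; ring
          have h3 := i.isLt
          omega⟩ = 2 * bVec m astar i) ∧
    bbar (m + 1) a' = 2 * bbar m astar := by
  have hK := Nat.two_pow_pos m
  have h2 := two_pow_succ_sub m
  have ha1 : ∀ (k : Fin (2^m-1)), a' ⟨k, lt1 m k⟩ = astar k := by
    intro k; rw [ha']; simp only; rw [dif_pos k.isLt]
  have ha2 : a' ⟨2^m - 1, lt2 m⟩ = 0 := by
    rw [ha']; simp only; rw [dif_neg (lt_irrefl _)]
  have ha3 : ∀ (k : Fin (2^m-1)), a' ⟨2^m + k, lt3 m k⟩ = 0 := by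
    intro k; rw [ha']; simp only; rw [dif_neg (by omega)]
  -- entries of the big Psi with row < 2^m - 1
  have e1 : ∀ (i j : Fin (2^m-1)),
      PsiM (m+1) ⟨i, lt1 m i⟩ ⟨j, lt1 m j⟩ = PsiM m i j := by
    intro i j
    rw [psi_row_lt m i j i.isLt (lt1 m j) (lt1 m i), dif_pos j.isLt]
  have e2 : ∀ (i : Fin (2^m-1)),
      PsiM (m+1) ⟨i, lt1 m i⟩ ⟨2^m - 1, lt2 m⟩ = 0 := by
    intro i
    rw [psi_row_lt m i (2^m-1) i.isLt (lt2 m) (lt1 m i), dif_neg (lt_irrefl _), if_pos rfl]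
  have e3 : ∀ (i j : Fin (2^m-1)),
      PsiM (m+1) ⟨i, lt1 m i⟩ ⟨2^m + j, lt3 m j⟩ = PsiM m i j := by
    intro i j
    rw [psi_row_lt m i (2^m + j) i.isLt (lt3 m j) (lt1 m i),
      dif_neg (by omega), if_neg (by omega)]
    congr 1
    exact Fin.ext (by simp)
  -- mulVec values
  have hmv1 : ∀ (j : Fin (2^m-1)),
      (PsiM (m+1)).mulVec a' ⟨j, lt1 m j⟩ = (PsiM m).mulVec astar j := by
    intro j
    show ∑ k, PsiM (m+1) ⟨j, lt1 m j⟩ k * a' k = ∑ k, PsiM m j k * astar k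
    rw [fin_sum_split m (fun k => PsiM (m+1) ⟨j, lt1 m j⟩ k * a' k)]
    simp only [ha2, ha3, mul_zero, Finset.sum_const_zero, add_zero]
    exact Finset.sum_congr rfl fun k _ => by rw [ha1 k, e1 j k]
  have hmv2 : (PsiM (m+1)).mulVec a' ⟨2^m - 1, lt2 m⟩ = 0 := by
    show ∑ k, PsiM (m+1) ⟨2^m - 1, lt2 m⟩ k * a' k = 0
    rw [fin_sum_split m (fun k => PsiM (m+1) ⟨2^m - 1, lt2 m⟩ k * a' k)]
    simp only [ha2, ha3, mul_zero, Finset.sum_const_zero, add_zero]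
    refine Finset.sum_eq_zero fun k _ => ?_
    rw [psi_symm, e2 k, zero_mul]
  have hmv3 : ∀ (j : Fin (2^m-1)),
      (PsiM (m+1)).mulVec a' ⟨2^m + j, lt3 m j⟩ = (PsiM m).mulVec astar j := by
    intro j
    show ∑ k, PsiM (m+1) ⟨2^m + j, lt3 m j⟩ k * a' k = ∑ k, PsiM m j k * astar k
    rw [fin_sum_split m (fun k => PsiM (m+1) ⟨2^m + j, lt3 m j⟩ k * a' k)]
    simp only [ha2, ha3, mul_zero, Finset.sum_const_zero, add_zero]
    refine Finset.sum_congr rfl fun k _ => ?_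
    rw [ha1 k, psi_symm, e3 k j, psi_symm]
  -- Part 1
  have hb : ∀ i : Fin (2^m-1),
      bVec (m+1) a' ⟨i, lt1 m i⟩ = 2 * bVec m astar i := by
    intro i
    show (∑ j, PsiM (m+1) ⟨i, lt1 m i⟩ j * Real.exp (-((PsiM (m+1)).mulVec a' j)))
        = 2 * bVec m astar i
    rw [fin_sum_split m
      (fun j => PsiM (m+1) ⟨i, lt1 m i⟩ j * Real.exp (-((PsiM (m+1)).mulVec a' j)))]
    rw [e2 i, zero_mul, add_zero]
    have p1 : (∑ j : Fin (2^m-1), PsiM (m+1) ⟨i, lt1 m i⟩ ⟨j, lt1 m j⟩ *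
        Real.exp (-((PsiM (m+1)).mulVec a' ⟨j, lt1 m j⟩))) = bVec m astar i :=
      Finset.sum_congr rfl fun j _ => by rw [e1 i j, hmv1 j]
    have p3 : (∑ j : Fin (2^m-1), PsiM (m+1) ⟨i, lt1 m i⟩ ⟨2^m + j, lt3 m j⟩ *
        Real.exp (-((PsiM (m+1)).mulVec a' ⟨2^m + j, lt3 m j⟩))) = bVec m astar i :=
      Finset.sum_congr rfl fun j _ => by rw [e3 i j, hmv3 j]
    rw [p1, p3]; ring
  constructor
  · intro i
    exact hb i
  · have hS : (∑ k, a' k) = ∑ k, astar k := by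
      rw [fin_sum_split m a', ha2]
      simp only [ha3, Finset.sum_const_zero, add_zero]
      exact Finset.sum_congr rfl fun k _ => ha1 k
    show (∑ j, (a' j / ∑ k, a' k) * bVec (m+1) a' j)
        = 2 * ∑ j, (astar j / ∑ k, astar k) * bVec m astar j
    rw [fin_sum_split m (fun j => (a' j / ∑ k, a' k) * bVec (m+1) a' j)]
    rw [ha2]
    simp only [ha3, zero_div, zero_mul, Finset.sum_const_zero, add_zero]
    rw [Finset.mul_sum]
    refine Finset.sum_congr rfl fun j _ => ?_
    rw [ha1 j, hS, hb j]
    ring
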